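/- For every H ∈ (0, 1/2] and every x ∈ [0,1], one has R_H(x) ≥ (1 − x^{2H})·x² ≥ 2H·x²·(1−x), where R_H(x) = 1 − 2Hx − (1−x)^{2H}(1−x²) + 2Hx^{2H+1} − x^{2+2H}. -/
import Mathlib

/-- The function `R_H` of formula (21). -/
noncomputable def RH (H x : ℝ) : ℝ :=
  1 - 2*H*x - (1-x) ^ (2*H) * (1 - x^2) + 2*H*x ^ (2*H+1) - x ^ (2+2*H)

/-- from expansion (24): for `H ∈ (0, 1/2]` and `x ∈ [0,1]`,
`R_H(x) ≥ (1 − x^{2H}) x² ≥ 2H x² (1−x)`. -/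
theorem statement8 (H x : ℝ) (hH : H ∈ Set.Ioc (0:ℝ) (1/2)) (hx : x ∈ Set.Icc (0:ℝ) 1) :
    (1 - x ^ (2*H)) * x^2 ≤ RH H x ∧ 2*H*x^2*(1 - x) ≤ (1 - x ^ (2*H)) * x^2 := by
  obtain ⟨hH0, hH1⟩ := hH
  obtain ⟨hx0, hx1⟩ := hx
  have hh0 : (0:ℝ) < 2*H := by linarith
  have hh1 : 2*H ≤ 1 := by linarith
  -- Bernoulli: x^(2H) ≤ 1 + 2H*(x-1)
  have bern2 : x ^ (2*H) ≤ 1 + (2*H)*(x-1) := by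
    have := rpow_one_add_le_one_add_mul_self (s := x - 1) (p := 2*H)
      (by linarith) (by linarith) hh1
    simpa using this
  constructor
  · -- first inequality
    rcases eq_or_lt_of_le hx0 with h0 | h0
    · subst h0
      simp [RH, Real.zero_rpow (by positivity : (2:ℝ)*H ≠ 0),
        Real.zero_rpow (by positivity : (2:ℝ)*H + 1 ≠ 0),
        Real.zero_rpow (by positivity : 2 + (2:ℝ)*H ≠ 0),
        Real.one_rpow]
    · -- x > 0
      have e1 : x ^ (2+2*H) = x^2 * x ^ (2*H) := by
        rw [show (2+2*H) = (2:ℝ) + 2*H from rfl, Real.rpow_add h0,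
          Real.rpow_two]
      have e2 : x ^ (2*H+1) = x ^ (2*H) * x := by
        rw [Real.rpow_add h0, Real.rpow_one]
      have bern1 : (1-x) ^ (2*H) ≤ 1 - (2*H)*x := by
        have := rpow_one_add_le_one_add_mul_self (s := -x) (p := 2*H)
          (by linarith) (by linarith) hh1
        have h' : (1 + -x) ^ (2*H) ≤ 1 + 2*H * (-x) := this
        rw [show (1:ℝ) + -x = 1 - x by ring] at h'
        linarith [h']
      have hx2 : x^2 ≤ x ^ (2*H) := by
        calc x^2 = x ^ (2:ℝ) := (Real.rpow_two x).symm
        _ ≤ x ^ (2*H) := Real.rpow_le_rpow_of_exponent_ge h0 hx1 (by linarith)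
      have hsq : (0:ℝ) ≤ 1 - x^2 := by nlinarith
      have key : (1-x) ^ (2*H) * (1 - x^2) ≤ (1 - 2*H*x) * (1 - x^2) := by
        apply mul_le_mul_of_nonneg_right bern1 hsq
      -- need: 2H x³ ≤ 2H x^(2H) x
      have h3 : 2*H*x^3 ≤ 2*H*(x ^ (2*H) * x) := by
        have : x^3 ≤ x ^ (2*H) * x := by nlinarith
        nlinarith
      unfold RH
      rw [e1, e2]
      nlinarith [key, h3]
  · -- second inequality
    have : 2*H*(1-x) ≤ 1 - x ^ (2*H) := by linarith [bern2]
    nlinarith [sq_nonneg x]
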